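/- Under the stated context with −c ≢ 1 (mod 4), write δ = r + s√−c with r, s rational integers. Then s divides d, the polynomial f_s(X) = ((X + s√−c)ᵖ − (X − s√−c)ᵖ)/(2s√−c) − d·C₁^{(p−1)/2}/s has rational integer coefficients, and f_s(r) = 0; in other words, r is an integer root of the explicit polynomial f_s ∈ ℤ[X]. -/

import Mathlib

open Polynomial IntermediateField

noncomputable def sqrtneg (c : ℕ) : ℂ := Complex.I * Real.sqrt c

lemma sqrtneg_sq (c : ℕ) : sqrtneg c ^ 2 = -(c : ℂ) := by
  have h : ((Real.sqrt c : ℝ) : ℂ) ^ 2 = (c : ℂ) := by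
    rw [← Complex.ofReal_pow, Real.sq_sqrt (by positivity)]
    norm_num
  simp [sqrtneg, mul_pow, Complex.I_sq, h]

lemma sqrtneg_isIntegral (c : ℕ) : IsIntegral ℚ (sqrtneg c) := by
  refine ⟨X ^ 2 + C (c : ℚ), monic_X_pow_add_C _ two_ne_zero, ?_⟩
  simp [eval₂_add, eval₂_pow, sqrtneg_sq c]

/-- The field `K = ℚ(√-c)`, realised as the subfield of `ℂ` generated by `i·√c`. -/
noncomputable def Kf (c : ℕ) : IntermediateField ℚ ℂ := ℚ⟮sqrtneg c⟯

/-- The class number of `ℚ(√-c)`. -/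
noncomputable def classNumberK (c : ℕ) : ℕ :=
  haveI : FiniteDimensional ℚ (Kf c) :=
    IntermediateField.adjoin.finiteDimensional (sqrtneg_isIntegral c)
  haveI : NumberField (Kf c) := ⟨⟩
  NumberField.classNumber (Kf c)

lemma binom_diff {R : Type*} [CommRing R] (p : ℕ) (a : R) :
    (X + C a)^p - (X - C a)^p
      = ∑ k ∈ Finset.range (p+1),
          C (a ^ (p-k) - (-a) ^ (p-k)) * (p.choose k : R[X]) * X^k := by
  have h2 : (X : R[X]) - C a = X + C (-a) := by rw [C_neg]; ring
  rw [add_pow (X : R[X]) (C a) p, h2, add_pow (X : R[X]) (C (-a)) p,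
    ← Finset.sum_sub_distrib]
  refine Finset.sum_congr rfl fun k _ => ?_
  rw [C_sub, C_pow, C_pow, C_neg]
  ring

lemma im_dvd_pow_im {D : ℤ} (z : ℤ√D) (n : ℕ) : z.im ∣ (z^n).im := by
  induction n with
  | zero => simp
  | succ n ih =>
    rw [pow_succ, Zsqrtd.im_mul]
    exact dvd_add (dvd_mul_left _ _) (ih.mul_right _)

lemma zsq_norm_pow {D : ℤ} (z : ℤ√D) (n : ℕ) :
    Zsqrtd.norm (z^n) = (Zsqrtd.norm z)^n := by
  induction n with
  | zero => simp [Zsqrtd.norm_one]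
  | succ n ih => rw [pow_succ, Zsqrtd.norm_mul, ih, pow_succ]

lemma odd_scalar {K : Type*} [CommRing K] (s ω cc n : K) (hω : ω*ω = cc) (j : ℕ) :
    2*s*ω * (n * s^(2*j) * cc^j) = ((s*ω)^(2*j+1) - (-(s*ω))^(2*j+1)) * n := by
  have h1 : (-(s*ω))^(2*j+1) = -(s*ω)^(2*j+1) := Odd.neg_pow ⟨j, by ring⟩ _
  have h2 : (s*ω)^(2*j+1) = s^(2*j) * cc^j * (s*ω) := by
    rw [pow_succ, pow_mul, sq, mul_mul_mul_comm, hω, mul_pow, ← sq, ← pow_mul]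
  rw [h1, sub_neg_eq_add, ← two_mul, h2]
  ring

noncomputable def Gpoly (p : ℕ) (s : ℤ) (c : ℕ) : Polynomial ℤ :=
  ∑ k ∈ Finset.range (p+1),
    C (if Odd (p-k) then (p.choose k : ℤ) * s^(p-k-1) * (-(c:ℤ))^((p-k-1)/2) else 0) * X^k

lemma key_identity (p : ℕ) (s : ℤ) (c : ℕ) (ω : ℂ) (hω : ω*ω = -(c:ℂ)) :
    C (2*(s:ℂ)*ω) * (Gpoly p s c).map (Int.castRingHom ℂ)
      = (X + C ((s:ℂ)*ω))^p - (X - C ((s:ℂ)*ω))^p := by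
  rw [binom_diff, Gpoly, Polynomial.map_sum, Finset.mul_sum]
  refine Finset.sum_congr rfl fun k _ => ?_
  simp only [Polynomial.map_mul, map_C, Polynomial.map_pow, map_X]
  rw [← C_eq_natCast, ← C_mul, ← mul_assoc, ← C_mul]
  congr 1
  by_cases hodd : Odd (p - k)
  · obtain ⟨j, hj⟩ := hodd
    rw [if_pos ⟨j, hj⟩, hj]
    have h1 : 2*j+1-1 = 2*j := by omega
    have h2 : 2*j/2 = j := by omega
    rw [h1, h2]
    congr 1
    simp only [Int.coe_castRingHom]
    push_cast
    exact odd_scalar (s:ℂ) ω (-(c:ℂ)) (p.choose k : ℂ) hω j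
  · rw [if_neg hodd, Even.neg_pow (Nat.not_odd_iff_even.mp hodd), sub_self, zero_mul]
    simp

theorem stmt15 (C₁ C₂ c d : ℕ) (hC₁pos : 0 < C₁) (hC₁sqf : Squarefree C₁)
    (hC₂pos : 0 < C₂) (hcop : Nat.gcd C₁ C₂ = 1) (hmod8 : C₁ * C₂ % 8 ≠ 7)
    (hcpos : 0 < c) (hdpos : 0 < d) (hcsqf : Squarefree c)
    (hfact : C₁ * C₂ = c * d ^ 2)
    (p : ℕ) (hp : p.Prime) (hpodd : Odd p)
    (hpcl : ¬ p ∣ classNumberK c)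
    (hp3 : p = 3 → ¬ ∃ m : ℤ, (C₁ : ℤ) * (C₂ : ℤ) = 3 * m ^ 2)
    (x y : ℕ) (hxpos : 0 < x) (hypos : 0 < y)
    (heq : C₁ * x ^ 2 + C₂ = y ^ p)
    (hgcd : Nat.gcd (Nat.gcd (C₁ * x ^ 2) C₂) (y ^ p) = 1)
    (δ : ℂ) (hδK : δ ∈ Kf c) (hδint : IsIntegral ℤ δ)
    (hδeq : (C₁ : ℂ) ^ ((p - 1) / 2) * ((C₁ : ℂ) * (x : ℂ) + (d : ℂ) * sqrtneg c) = δ ^ p)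
    (hc4 : ¬ (-(c : ℤ) ≡ 1 [ZMOD 4]))
    (r s : ℤ) (hδrs : δ = (r : ℂ) + (s : ℂ) * sqrtneg c) :
    s ∣ (d : ℤ) ∧
    ∃ g : Polynomial ℤ,
      g.map (Int.castRingHom ℂ) =
        C (2 * (s : ℂ) * sqrtneg c)⁻¹ *
            ((X + C ((s : ℂ) * sqrtneg c)) ^ p - (X - C ((s : ℂ) * sqrtneg c)) ^ p) -
          C ((d : ℂ) * (C₁ : ℂ) ^ ((p - 1) / 2) / (s : ℂ)) ∧
      g.eval r = 0 := by
  obtain ⟨m', hm'⟩ := hpodd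
  set m : ℕ := (p - 1) / 2 with hmdef
  have hP : p = 2 * m + 1 := by omega
  set ω : ℂ := sqrtneg c with hωdef
  have hω : ω * ω = -(c:ℂ) := by rw [← sq]; exact sqrtneg_sq c
  have hωZ : ω * ω = ((-(c:ℤ) : ℤ) : ℂ) := by push_cast; exact hω
  have hωne : ω ≠ 0 := by
    intro h
    rw [h, mul_zero] at hω
    have : (c:ℂ) = 0 := by linear_combination hω
    exact_mod_cast hcpos.ne' (by exact_mod_cast this)
  -- the two embeddings of ℤ√(-c) into ℂ
  set φ : ℤ√(-(c:ℤ)) →+* ℂ := Zsqrtd.lift ⟨ω, hωZ⟩ with hφdef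
  have hωZ' : (-ω) * (-ω) = ((-(c:ℤ) : ℤ) : ℂ) := by rw [neg_mul_neg]; exact hωZ
  set φ' : ℤ√(-(c:ℤ)) →+* ℂ := Zsqrtd.lift ⟨-ω, hωZ'⟩ with hφ'def
  set z : ℤ√(-(c:ℤ)) := ⟨r, s⟩ with hzdef
  set w : ℤ√(-(c:ℤ)) := ⟨(C₁:ℤ)^(m+1)*x, (C₁:ℤ)^m*d⟩ with hwdef
  have hφz : φ z = δ := by
    rw [hδrs, hφdef, Zsqrtd.lift_apply_apply]
  have hφw : φ w = (C₁:ℂ)^m * ((C₁:ℂ) * x + (d:ℂ) * ω) := by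
    rw [hφdef, Zsqrtd.lift_apply_apply]
    simp only [hwdef]
    push_cast
    ring
  have hnots : ∀ n : ℤ, -(c:ℤ) ≠ n * n := by
    intro n h
    nlinarith [mul_self_nonneg n, hcpos]
  have hz : z ^ p = w := by
    apply Zsqrtd.lift_injective ⟨ω, hωZ⟩ hnots
    rw [map_pow]
    show φ z ^ p = φ w
    rw [hφz, hφw, ← hδeq]
  -- norm computation : r² + c s² = C₁ y
  have hfz : (c:ℤ) * d^2 = (C₁:ℤ) * C₂ := by exact_mod_cast hfact.symm
  have hez : (C₁:ℤ) * x^2 + C₂ = (y:ℤ)^p := by exact_mod_cast heq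
  have hnormw : Zsqrtd.norm w = ((C₁:ℤ) * y)^p := by
    rw [hwdef, Zsqrtd.norm_def, hP] at *
    push_cast
    linear_combination ((C₁:ℤ))^(2*m) * hfz + (C₁:ℤ)^(2*m+1) * hez
  have hry : r^2 + (c:ℤ) * s^2 = (C₁:ℤ) * y := by
    have h1 : Zsqrtd.norm (z^p) = ((C₁:ℤ)*y)^p := by rw [hz, hnormw]
    rw [zsq_norm_pow] at h1
    have h2 : Zsqrtd.norm z = r^2 + (c:ℤ)*s^2 := by
      rw [hzdef, Zsqrtd.norm_def]; ring
    rw [h2] at h1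
    exact (Odd.strictMono_pow (R := ℤ) ⟨m, by omega⟩).injective h1
  -- s divides C₁^m * d
  have hsdvdm : s ∣ (C₁:ℤ)^m * d := by
    have h := im_dvd_pow_im z p
    rw [hz] at h
    exact h
  have hs0 : s ≠ 0 := by
    intro h
    rw [h] at hsdvdm
    have h0 : (C₁:ℤ)^m * d = 0 := zero_dvd_iff.mp hsdvdm
    have : (0:ℤ) < (C₁:ℤ)^m * d := by positivity
    omega
  -- coprimality of s and C₁
  have hcopr : IsCoprime s ((C₁:ℤ)) := by
    rw [Int.isCoprime_iff_gcd_eq_one]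
    by_contra hne
    obtain ⟨q, hq, hqd⟩ := Nat.exists_prime_and_dvd hne
    have hqgcd : (q:ℤ) ∣ Int.gcd s (C₁:ℤ) := Int.natCast_dvd_natCast.mpr hqd
    have hqs : (q:ℤ) ∣ s := hqgcd.trans (Int.gcd_dvd_left _ _)
    have hqC₁ℤ : (q:ℤ) ∣ (C₁:ℤ) := hqgcd.trans (Int.gcd_dvd_right _ _)
    have hqC₁ : q ∣ C₁ := by exact_mod_cast hqC₁ℤ
    have hqP : Prime (q:ℤ) := Nat.prime_iff_prime_int.mp hq
    have hqr : (q:ℤ) ∣ r := by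
      apply hqP.dvd_of_dvd_pow (n := 2)
      have h2 : r^2 = (C₁:ℤ)*y - c*s^2 := by linarith [hry]
      rw [h2]
      exact dvd_sub (hqC₁ℤ.mul_right _)
        (dvd_mul_of_dvd_right (dvd_pow hqs (by norm_num)) _)
    have hq2 : (q:ℤ)^2 ∣ (C₁:ℤ)*y := by
      rw [← hry]
      exact dvd_add (pow_dvd_pow_of_dvd hqr 2)
        (dvd_mul_of_dvd_right (pow_dvd_pow_of_dvd hqs 2) _)
    have hq2n : q^2 ∣ C₁*y := by exact_mod_cast hq2
    obtain ⟨C₁', hC₁'⟩ := hqC₁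
    have hqC₁' : ¬ q ∣ C₁' := by
      intro ⟨t, ht⟩
      have : IsUnit q := hC₁sqf q ⟨t, by rw [hC₁', ht]; ring⟩
      rw [Nat.isUnit_iff] at this
      exact hq.one_lt.ne' this
    have hqy : q ∣ y := by
      have h1 : q * q ∣ q * (C₁' * y) := by
        have : q * (C₁' * y) = C₁ * y := by rw [hC₁']; ring
        rw [this, ← sq]
        exact hq2n
      have h2 : q ∣ C₁' * y := (mul_dvd_mul_iff_left hq.pos.ne').mp h1
      rcases (Nat.Prime.dvd_mul hq).mp h2 with h | h
      · exact absurd h hqC₁'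
      · exact h
    have hqC₂ : q ∣ C₂ := by
      have h1 : q ∣ y^p := dvd_pow hqy hp.pos.ne'
      have h2 : q ∣ C₁ * x^2 := Dvd.dvd.mul_right ⟨C₁', hC₁'⟩ _
      have h3 : C₂ = y^p - C₁*x^2 := by omega
      rw [h3]
      exact Nat.dvd_sub h1 h2
    have : q ∣ 1 := hcop ▸ Nat.dvd_gcd (⟨C₁', hC₁'⟩) hqC₂
    exact hq.one_lt.ne' (Nat.dvd_one.mp this)
  have hsd : s ∣ (d:ℤ) := (hcopr.pow_right).dvd_of_dvd_mul_left hsdvdm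
  refine ⟨hsd, ?_⟩
  obtain ⟨u, hu⟩ := hsd
  have hdc : (d:ℂ) = (s:ℂ) * u := by exact_mod_cast hu
  have hsC : (s:ℂ) ≠ 0 := Int.cast_ne_zero.mpr hs0
  have ht : (2*(s:ℂ)*ω) ≠ 0 := mul_ne_zero (mul_ne_zero two_ne_zero hsC) hωne
  have hplus : ((r:ℂ) + (s:ℂ)*ω)^p = (C₁:ℂ)^m * ((C₁:ℂ)*x + (d:ℂ)*ω) := by
    rw [← hδrs, ← hδeq]
  have hminus : ((r:ℂ) - (s:ℂ)*ω)^p = (C₁:ℂ)^m * ((C₁:ℂ)*x - (d:ℂ)*ω) := by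
    have h1 := congrArg φ' hz
    rw [map_pow, hφ'def, Zsqrtd.lift_apply_apply, Zsqrtd.lift_apply_apply] at h1
    have h2 : (r:ℂ) - (s:ℂ)*ω = (z.re : ℂ) + (z.im : ℂ) * (-ω) := by
      rw [hzdef]; push_cast; ring
    rw [h2, h1, hwdef]
    push_cast
    ring
  refine ⟨Gpoly p s c - C (u * (C₁:ℤ)^m), ?_, ?_⟩
  · rw [Polynomial.map_sub, map_C, ← key_identity p s c ω hω, ← mul_assoc, ← C_mul,
      inv_mul_cancel₀ ht, C_1, one_mul]
    have hsc : ((Int.castRingHom ℂ) (u * (C₁:ℤ)^m)) = (d:ℂ) * (C₁:ℂ)^m / (s:ℂ) := by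
      simp only [Int.coe_castRingHom]
      push_cast
      rw [hdc]
      field_simp
    rw [hsc]
  · have hev := congrArg (Polynomial.eval (r:ℂ)) (key_identity p s c ω hω)
    simp only [eval_mul, eval_C, eval_sub, eval_add, eval_pow, eval_X,
      eval_intCast_map, Int.coe_castRingHom] at hev
    have h2 : (((Gpoly p s c).eval r : ℤ) : ℂ) = ((u * (C₁:ℤ)^m : ℤ) : ℂ) := by
      apply mul_left_cancel₀ ht
      rw [hplus, hminus] at hev
      push_cast
      linear_combination hev + 2*(C₁:ℂ)^m*ω*hdc
    have h3 : (Gpoly p s c).eval r = u * (C₁:ℤ)^m := by exact_mod_cast h2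
    rw [eval_sub, eval_C, h3, sub_self]
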